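/- Let A ∈ ℝ^{m×n}, ω ∈ ℝ^m with ‖ω‖₂ ≤ δ, x⋆ ∈ ℝⁿ with ‖x⋆‖₀ ≤ s, y = A x⋆ + ω, and μ > 0. Suppose the iterates satisfy Card(supp(x_t) \ supp(x⋆)) < s, Card(supp(x_{t+1}) \ supp(x⋆)) < s, and ‖x_t − x⋆‖₂ ≤ Δ_t, where x_{t+1} = argmin_x { λ_t μ ‖x‖₁ + ½‖x − (x_t − μ Aᵀ(A x_t − y))‖₂² } with λ_t = (ξ_s δ + ρ_{s,2s} Δ_t/μ)/√s. Then ‖x_{t+1} − x⋆‖₂ ≤ 2 ρ_{2s,2s} Δ_t + 2 ξ_{2s} μ δ. -/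

import Mathlib

open MeasureTheory ProbabilityTheory

noncomputable section

/-- Euclidean dot product on `Fin n → ℝ`. -/
def dotp {n : ℕ} (x y : Fin n → ℝ) : ℝ := ∑ i, x i * y i

/-- Euclidean (ℓ₂) norm. -/
def l2norm {n : ℕ} (x : Fin n → ℝ) : ℝ := Real.sqrt (∑ i, x i ^ 2)

/-- ℓ₁ norm. -/
def l1norm {n : ℕ} (x : Fin n → ℝ) : ℝ := ∑ i, |x i|

/-- Support of a vector as a finite set. -/
def suppF {n : ℕ} (x : Fin n → ℝ) : Finset (Fin n) :=
  Finset.univ.filter (fun i => x i ≠ 0)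

/-- ℓ₀ "norm": number of nonzero entries. -/
def l0 {n : ℕ} (x : Fin n → ℝ) : ℕ := (suppF x).card

/-- The Euclidean unit sphere `S^{n-1}`. -/
def unitSphere (n : ℕ) : Set (Fin n → ℝ) := {x | l2norm x = 1}

/-- The set of `s`-sparse vectors. -/
def sparseSet (n s : ℕ) : Set (Fin n → ℝ) := {x | l0 x ≤ s}

/-- Matrix-vector product, viewing `A : Fin m → Fin n → ℝ` as the rows of a matrix. -/
def mvec {m n : ℕ} (A : Fin m → Fin n → ℝ) (x : Fin n → ℝ) : Fin m → ℝ := fun i => dotp (A i) x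

/-- Transposed matrix-vector product `Aᵀ y`. -/
def tmvec {m n : ℕ} (A : Fin m → Fin n → ℝ) (y : Fin m → ℝ) : Fin n → ℝ := fun j => ∑ i, A i j * y i

/-- Restricted singular value `ρ(P,Q) = sup_{v∈P,u∈Q} ⟨v, (I - μ AᵀA) u⟩`. -/
def rsRho {m n : ℕ} (A : Fin m → Fin n → ℝ) (μ : ℝ) (P Q : Set (Fin n → ℝ)) : ℝ :=
  sSup {t | ∃ v ∈ P, ∃ u ∈ Q, t = dotp v (u - μ • tmvec A (mvec A u))}

/-- Restricted singular value `ξ(P) = sup_{v∈P} ⟨v, Aᵀ (w/‖w‖₂)⟩`. -/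
def rsXi {m n : ℕ} (A : Fin m → Fin n → ℝ) (w : Fin m → ℝ) (P : Set (Fin n → ℝ)) : ℝ :=
  sSup {t | ∃ v ∈ P, t = dotp v (tmvec A ((l2norm w)⁻¹ • w))}

/-- Gaussian complexity `γ(C) = E sup_{x ∈ C} |⟨g, x⟩|`, `g ∼ N(0, I_n)`. -/
def gcomp {n : ℕ} (C : Set (Fin n → ℝ)) : ℝ :=
  ∫ g, sSup ((fun x => |dotp g x|) '' C) ∂(Measure.pi fun _ : Fin n => gaussianReal 0 1)

/-- Sub-Gaussian (ψ₂) norm of a real random variable. -/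
def psi2 {Ω : Type*} [MeasureSpace Ω] (Z : Ω → ℝ) : ℝ :=
  sInf {t | 0 < t ∧ ∫ ω, Real.exp (Z ω ^ 2 / t ^ 2) ≤ 2}

/-- Sub-Gaussian (ψ₂) norm of a random vector. -/
def vpsi2 {Ω : Type*} [MeasureSpace Ω] {n : ℕ} (X : Ω → Fin n → ℝ) : ℝ :=
  sSup {t | ∃ u ∈ unitSphere n, t = psi2 (fun ω => dotp (X ω) u)}

/-- A random vector is centered and isotropic. -/
def centIso {Ω : Type*} [MeasureSpace Ω] {n : ℕ} (X : Ω → Fin n → ℝ) : Prop :=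
  (∀ j, ∫ ω, X ω j = 0) ∧ ∀ j k, ∫ ω, X ω j * X ω k = if j = k then (1 : ℝ) else 0


/-! ### Auxiliary lemmas for `stmt2` -/

noncomputable section Stmt2Aux
namespace Stmt2Aux

variable {m n : ℕ}

lemma l2norm_nonneg (x : Fin n → ℝ) : 0 ≤ l2norm x := Real.sqrt_nonneg _

lemma l2norm_sq (x : Fin n → ℝ) : l2norm x ^ 2 = ∑ i, x i ^ 2 :=
  Real.sq_sqrt (Finset.sum_nonneg fun _ _ => sq_nonneg _)

lemma dotp_self (x : Fin n → ℝ) : dotp x x = l2norm x ^ 2 := by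
  rw [l2norm_sq]; simp [dotp, sq]

lemma l2norm_eq_zero {x : Fin n → ℝ} (h : l2norm x = 0) : x = 0 := by
  have h2 : ∑ i, x i ^ 2 = 0 :=
    le_antisymm (Real.sqrt_eq_zero'.mp h) (Finset.sum_nonneg fun _ _ => sq_nonneg _)
  funext i
  have := (Finset.sum_eq_zero_iff_of_nonneg (fun i _ => sq_nonneg (x i))).mp h2 i (Finset.mem_univ i)
  exact pow_eq_zero_iff two_ne_zero |>.mp this

lemma l2norm_pos {x : Fin n → ℝ} (h : x ≠ 0) : 0 < l2norm x :=
  lt_of_le_of_ne (l2norm_nonneg x) (fun h0 => h (l2norm_eq_zero h0.symm))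

lemma dotp_le (x y : Fin n → ℝ) : dotp x y ≤ l2norm x * l2norm y := by
  simpa [dotp, l2norm] using Real.sum_mul_le_sqrt_mul_sqrt Finset.univ x y

@[simp] lemma dotp_neg_left (x y : Fin n → ℝ) : dotp (-x) y = -dotp x y := by
  simp [dotp, Finset.sum_neg_distrib]

@[simp] lemma dotp_neg_right (x y : Fin n → ℝ) : dotp x (-y) = -dotp x y := by
  simp [dotp, Finset.sum_neg_distrib]

@[simp] lemma l2norm_neg (x : Fin n → ℝ) : l2norm (-x) = l2norm x := by
  simp [l2norm]

lemma abs_dotp_le (x y : Fin n → ℝ) : |dotp x y| ≤ l2norm x * l2norm y := by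
  rw [abs_le]
  constructor
  · have := dotp_le (-x) y; simp at this; linarith
  · exact dotp_le x y

@[simp] lemma dotp_smul_left (c : ℝ) (x y : Fin n → ℝ) : dotp (c • x) y = c * dotp x y := by
  simp [dotp, Finset.mul_sum, mul_assoc]

@[simp] lemma dotp_smul_right (c : ℝ) (x y : Fin n → ℝ) : dotp x (c • y) = c * dotp x y := by
  simp [dotp, Finset.mul_sum]; exact Finset.sum_congr rfl fun i _ => by ring

lemma dotp_sub_right (x y z : Fin n → ℝ) : dotp x (y - z) = dotp x y - dotp x z := by
  simp [dotp, mul_sub, Finset.sum_sub_distrib]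

lemma dotp_add_right (x y z : Fin n → ℝ) : dotp x (y + z) = dotp x y + dotp x z := by
  simp [dotp, mul_add, Finset.sum_add_distrib]

lemma dotp_comm (x y : Fin n → ℝ) : dotp x y = dotp y x := by
  simp [dotp, mul_comm]

@[simp] lemma dotp_zero_left (y : Fin n → ℝ) : dotp (0 : Fin n → ℝ) y = 0 := by simp [dotp]
@[simp] lemma dotp_zero_right (x : Fin n → ℝ) : dotp x (0 : Fin n → ℝ) = 0 := by simp [dotp]

lemma l2norm_smul (c : ℝ) (x : Fin n → ℝ) : l2norm (c • x) = |c| * l2norm x := by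
  simp only [l2norm, Pi.smul_apply, smul_eq_mul, mul_pow]
  rw [← Finset.mul_sum, Real.sqrt_mul (sq_nonneg c), Real.sqrt_sq_eq_abs]

lemma mvec_sub (A : Fin m → Fin n → ℝ) (x y : Fin n → ℝ) :
    mvec A (x - y) = mvec A x - mvec A y := by
  funext i; simp [mvec, dotp, mul_sub, Finset.sum_sub_distrib]

lemma mvec_smul (A : Fin m → Fin n → ℝ) (c : ℝ) (x : Fin n → ℝ) :
    mvec A (c • x) = c • mvec A x := by
  funext i; simp [mvec, dotp, Finset.mul_sum]
  exact Finset.sum_congr rfl fun j _ => by ring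

lemma tmvec_sub (A : Fin m → Fin n → ℝ) (x y : Fin m → ℝ) :
    tmvec A (x - y) = tmvec A x - tmvec A y := by
  funext j; simp [tmvec, mul_sub, Finset.sum_sub_distrib]

lemma tmvec_smul (A : Fin m → Fin n → ℝ) (c : ℝ) (x : Fin m → ℝ) :
    tmvec A (c • x) = c • tmvec A x := by
  funext j; simp [tmvec, Finset.mul_sum]
  exact Finset.sum_congr rfl fun i _ => by ring

@[simp] lemma tmvec_zero (A : Fin m → Fin n → ℝ) : tmvec A (0 : Fin m → ℝ) = 0 := by
  funext j; simp [tmvec]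

@[simp] lemma mvec_zero (A : Fin m → Fin n → ℝ) : mvec A (0 : Fin n → ℝ) = 0 := by
  funext i; simp [mvec, dotp]

lemma dotp_tmvec (A : Fin m → Fin n → ℝ) (v : Fin n → ℝ) (z : Fin m → ℝ) :
    dotp v (tmvec A z) = dotp (mvec A v) z := by
  simp only [dotp, tmvec, mvec, Finset.mul_sum, Finset.sum_mul]
  rw [Finset.sum_comm]
  exact Finset.sum_congr rfl fun i _ => Finset.sum_congr rfl fun j _ => by ring

/-- Frobenius norm. -/
def frob (A : Fin m → Fin n → ℝ) : ℝ := Real.sqrt (∑ i, ∑ j, A i j ^ 2)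

lemma frob_nonneg (A : Fin m → Fin n → ℝ) : 0 ≤ frob A := Real.sqrt_nonneg _

lemma mvec_norm_le (A : Fin m → Fin n → ℝ) (v : Fin n → ℝ) :
    l2norm (mvec A v) ≤ frob A * l2norm v := by
  have key : ∑ i, (dotp (A i) v) ^ 2 ≤ (∑ i, ∑ j, A i j ^ 2) * ∑ j, v j ^ 2 := by
    rw [Finset.sum_mul]
    exact Finset.sum_le_sum fun i _ =>
      Finset.sum_mul_sq_le_sq_mul_sq Finset.univ (A i) v
  have h1 : l2norm (mvec A v) ≤ Real.sqrt ((∑ i, ∑ j, A i j ^ 2) * ∑ j, v j ^ 2) := by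
    unfold l2norm mvec
    exact Real.sqrt_le_sqrt key
  calc l2norm (mvec A v) ≤ _ := h1
    _ = frob A * l2norm v := by
        rw [Real.sqrt_mul (Finset.sum_nonneg fun i _ => Finset.sum_nonneg fun j _ => sq_nonneg _)]
        rfl

lemma l0_smul_le (c : ℝ) (x : Fin n → ℝ) : l0 (c • x) ≤ l0 x := by
  apply Finset.card_le_card
  intro i hi
  simp only [suppF, Finset.mem_filter, Finset.mem_univ, true_and, Pi.smul_apply,
    smul_eq_mul] at hi ⊢
  exact fun h => hi (by rw [h, mul_zero])

lemma supp_sub_subset (x y : Fin n → ℝ) :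
    suppF (x - y) ⊆ (suppF x \ suppF y) ∪ suppF y := by
  intro i hi
  simp only [suppF, Finset.mem_filter, Finset.mem_univ, true_and, Pi.sub_apply,
    Finset.mem_union, Finset.mem_sdiff] at hi ⊢
  by_cases hy : y i = 0
  · left
    refine ⟨fun hx => hi (by rw [hx, hy, sub_zero]), by simp [hy]⟩
  · right; exact hy

lemma l0_sub_le (x y : Fin n → ℝ) : l0 (x - y) ≤ (suppF x \ suppF y).card + (suppF y).card :=
  le_trans (Finset.card_le_card (supp_sub_subset x y)) (Finset.card_union_le _ _)

/-- Normalization lands in `sparseSet ∩ unitSphere`. -/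
lemma normalize_mem {s' : ℕ} {x : Fin n → ℝ} (hx : x ≠ 0) (hs : l0 x ≤ s') :
    (l2norm x)⁻¹ • x ∈ sparseSet n s' ∩ unitSphere n := by
  have hpos := l2norm_pos hx
  constructor
  · exact le_trans (l0_smul_le _ x) hs
  · show l2norm _ = 1
    rw [l2norm_smul, abs_of_nonneg (inv_nonneg.mpr hpos.le), inv_mul_cancel₀ hpos.ne']

/-- The standard basis vector. -/
def e0 (hn : 0 < n) : Fin n → ℝ := fun j => if j = ⟨0, hn⟩ then 1 else 0

lemma e0_mem {s' : ℕ} (hn : 0 < n) (hs : 1 ≤ s') :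
    e0 hn ∈ sparseSet n s' ∩ unitSphere n := by
  constructor
  · show l0 _ ≤ s'
    have hsub : suppF (e0 hn) ⊆ {⟨0, hn⟩} := by
      intro i hi
      simp only [suppF, Finset.mem_filter, Finset.mem_univ, true_and, e0] at hi
      simp only [Finset.mem_singleton]
      by_contra hne
      simp [hne] at hi
    calc l0 (e0 hn) ≤ ({⟨0, hn⟩} : Finset (Fin n)).card := Finset.card_le_card hsub
      _ = 1 := Finset.card_singleton _
      _ ≤ s' := hs
  · show l2norm _ = 1
    unfold l2norm e0
    rw [show (∑ j, (if j = (⟨0, hn⟩ : Fin n) then (1:ℝ) else 0) ^ 2) = 1 by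
      rw [Finset.sum_eq_single (⟨0, hn⟩ : Fin n)]
      · simp
      · intro b _ hb; simp [hb]
      · intro h; exact absurd (Finset.mem_univ _) h]
    exact Real.sqrt_one

lemma neg_mem {s' : ℕ} {x : Fin n → ℝ} (hx : x ∈ sparseSet n s' ∩ unitSphere n) :
    -x ∈ sparseSet n s' ∩ unitSphere n := by
  obtain ⟨h1, h2⟩ := hx
  constructor
  · show l0 (-x) ≤ s'
    have he : l0 (-x) = l0 x := by
      unfold l0 suppF; congr 1; ext i; simp
    rw [he]; exact h1
  · show l2norm (-x) = 1
    rw [l2norm_neg]; exact h2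

lemma sSup_nonneg_of_pm {T : Set ℝ} (hb : BddAbove T) {t : ℝ} (ht : t ∈ T) (ht' : -t ∈ T) :
    0 ≤ sSup T := by
  rcases le_or_gt 0 t with h | h
  · exact h.trans (le_csSup hb ht)
  · exact le_trans (by linarith) (le_csSup hb ht')

/-- The set defining `rsRho` is bounded above when `P, Q ⊆ S^{n-1}`. -/
lemma rho_bddAbove (A : Fin m → Fin n → ℝ) (μ : ℝ) (P Q : Set (Fin n → ℝ))
    (hP : P ⊆ unitSphere n) (hQ : Q ⊆ unitSphere n) :
    BddAbove {t | ∃ v ∈ P, ∃ u ∈ Q, t = dotp v (u - μ • tmvec A (mvec A u))} := by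
  refine ⟨1 + |μ| * frob A ^ 2, ?_⟩
  rintro t ⟨v, hv, u, hu, rfl⟩
  have hv1 : l2norm v = 1 := hP hv
  have hu1 : l2norm u = 1 := hQ hu
  rw [dotp_sub_right, dotp_smul_right, dotp_tmvec]
  have h1 : dotp v u ≤ 1 := by have := dotp_le v u; rw [hv1, hu1] at this; linarith
  have h2 : |dotp (mvec A v) (mvec A u)| ≤ frob A ^ 2 := by
    calc |dotp (mvec A v) (mvec A u)| ≤ l2norm (mvec A v) * l2norm (mvec A u) := abs_dotp_le _ _
      _ ≤ (frob A * l2norm v) * (frob A * l2norm u) :=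
          mul_le_mul (mvec_norm_le A v) (mvec_norm_le A u) (l2norm_nonneg _)
            (mul_nonneg (frob_nonneg A) (l2norm_nonneg _))
      _ = frob A ^ 2 := by rw [hv1, hu1]; ring
  have h3 : |μ * dotp (mvec A v) (mvec A u)| ≤ |μ| * frob A ^ 2 := by
    rw [abs_mul]; exact mul_le_mul_of_nonneg_left h2 (abs_nonneg μ)
  have h4 := neg_abs_le (μ * dotp (mvec A v) (mvec A u))
  linarith

/-- The set defining `rsXi` is bounded above when `P ⊆ S^{n-1}`. -/
lemma xi_bddAbove (A : Fin m → Fin n → ℝ) (w : Fin m → ℝ) (P : Set (Fin n → ℝ))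
    (hP : P ⊆ unitSphere n) :
    BddAbove {t | ∃ v ∈ P, t = dotp v (tmvec A ((l2norm w)⁻¹ • w))} := by
  refine ⟨frob A, ?_⟩
  rintro t ⟨v, hv, rfl⟩
  have hv1 : l2norm v = 1 := hP hv
  rw [dotp_tmvec]
  have hws : l2norm ((l2norm w)⁻¹ • w) ≤ 1 := by
    rw [l2norm_smul, abs_of_nonneg (inv_nonneg.mpr (l2norm_nonneg w))]
    rcases eq_or_ne (l2norm w) 0 with h | h
    · rw [h]; norm_num
    · rw [inv_mul_cancel₀ h]
  have h1 : l2norm (mvec A v) ≤ frob A := by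
    have := mvec_norm_le A v; rw [hv1, mul_one] at this; exact this
  calc dotp (mvec A v) ((l2norm w)⁻¹ • w)
      ≤ l2norm (mvec A v) * l2norm ((l2norm w)⁻¹ • w) := dotp_le _ _
    _ ≤ frob A * 1 :=
        mul_le_mul h1 hws (l2norm_nonneg _) (frob_nonneg A)
    _ = frob A := mul_one _

lemma rho_nonneg (A : Fin m → Fin n → ℝ) (μ : ℝ) {a b : ℕ} (hn : 0 < n)
    (ha : 1 ≤ a) (hb : 1 ≤ b) :
    0 ≤ rsRho A μ (sparseSet n a ∩ unitSphere n) (sparseSet n b ∩ unitSphere n) := by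
  have hbdd := rho_bddAbove A μ (sparseSet n a ∩ unitSphere n) (sparseSet n b ∩ unitSphere n)
    Set.inter_subset_right Set.inter_subset_right
  have he : e0 hn ∈ sparseSet n a ∩ unitSphere n := e0_mem hn ha
  have he' : e0 hn ∈ sparseSet n b ∩ unitSphere n := e0_mem hn hb
  exact sSup_nonneg_of_pm hbdd
    ⟨e0 hn, he, e0 hn, he', rfl⟩
    ⟨-(e0 hn), neg_mem he, e0 hn, he', by rw [dotp_neg_left]⟩

lemma xi_nonneg (A : Fin m → Fin n → ℝ) (w : Fin m → ℝ) {a : ℕ} (hn : 0 < n) (ha : 1 ≤ a) :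
    0 ≤ rsXi A w (sparseSet n a ∩ unitSphere n) := by
  have hbdd := xi_bddAbove A w (sparseSet n a ∩ unitSphere n) Set.inter_subset_right
  have he : e0 hn ∈ sparseSet n a ∩ unitSphere n := e0_mem hn ha
  exact sSup_nonneg_of_pm hbdd
    ⟨e0 hn, he, rfl⟩
    ⟨-(e0 hn), neg_mem he, by rw [dotp_neg_left]⟩

lemma rho_mono (A : Fin m → Fin n → ℝ) (μ : ℝ) {a a' b : ℕ} (hn : 0 < n)
    (ha : 1 ≤ a) (hb : 1 ≤ b) (haa : a ≤ a') :
    rsRho A μ (sparseSet n a ∩ unitSphere n) (sparseSet n b ∩ unitSphere n) ≤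
    rsRho A μ (sparseSet n a' ∩ unitSphere n) (sparseSet n b ∩ unitSphere n) := by
  apply csSup_le_csSup
  · exact rho_bddAbove A μ _ _ Set.inter_subset_right Set.inter_subset_right
  · exact ⟨_, e0 hn, e0_mem hn ha, e0 hn, e0_mem hn hb, rfl⟩
  · rintro t ⟨v, ⟨hv1, hv2⟩, u, hu, rfl⟩
    exact ⟨v, ⟨le_trans hv1 haa, hv2⟩, u, hu, rfl⟩

lemma xi_mono (A : Fin m → Fin n → ℝ) (w : Fin m → ℝ) {a a' : ℕ} (hn : 0 < n)
    (ha : 1 ≤ a) (haa : a ≤ a') :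
    rsXi A w (sparseSet n a ∩ unitSphere n) ≤ rsXi A w (sparseSet n a' ∩ unitSphere n) := by
  apply csSup_le_csSup
  · exact xi_bddAbove A w _ Set.inter_subset_right
  · exact ⟨_, e0 hn, e0_mem hn ha, rfl⟩
  · rintro t ⟨v, ⟨hv1, hv2⟩, rfl⟩
    exact ⟨v, ⟨le_trans hv1 haa, hv2⟩, rfl⟩

/-- The ρ-type bound. -/
lemma rho_bound (A : Fin m → Fin n → ℝ) (μ : ℝ) {a b : ℕ} (hn : 0 < n)
    (ha : 1 ≤ a) (hb : 1 ≤ b) (h u : Fin n → ℝ) (hh : l0 h ≤ a) (hu : l0 u ≤ b) :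
    dotp h (u - μ • tmvec A (mvec A u)) ≤
      rsRho A μ (sparseSet n a ∩ unitSphere n) (sparseSet n b ∩ unitSphere n)
        * (l2norm h * l2norm u) := by
  have hρ := rho_nonneg A μ (a := a) (b := b) hn ha hb
  rcases eq_or_ne h 0 with rfl | hh0
  · rw [dotp_zero_left]
    have : l2norm (0 : Fin n → ℝ) = 0 := by simp [l2norm]
    rw [this]
    nlinarith [l2norm_nonneg u]
  rcases eq_or_ne u 0 with rfl | hu0
  · have hzero : (0 : Fin n → ℝ) - μ • tmvec A (mvec A 0) = 0 := by simp
    rw [hzero, dotp_zero_right]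
    have : l2norm (0 : Fin n → ℝ) = 0 := by simp [l2norm]
    rw [this]
    nlinarith [l2norm_nonneg h]
  have hhp := l2norm_pos hh0
  have hup := l2norm_pos hu0
  set v : Fin n → ℝ := (l2norm h)⁻¹ • h with hv
  set u' : Fin n → ℝ := (l2norm u)⁻¹ • u with hu'
  have hvm := normalize_mem hh0 hh
  have hum := normalize_mem hu0 hu
  have hmem : dotp v (u' - μ • tmvec A (mvec A u')) ∈
      {t | ∃ v ∈ sparseSet n a ∩ unitSphere n, ∃ u ∈ sparseSet n b ∩ unitSphere n,
        t = dotp v (u - μ • tmvec A (mvec A u))} :=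
    ⟨v, hvm, u', hum, rfl⟩
  have hle := le_csSup (rho_bddAbove A μ _ _ Set.inter_subset_right Set.inter_subset_right) hmem
  have hexp : u' - μ • tmvec A (mvec A u') = (l2norm u)⁻¹ • (u - μ • tmvec A (mvec A u)) := by
    rw [hu', mvec_smul, tmvec_smul, smul_sub, smul_comm μ (l2norm u)⁻¹]
  have hval : dotp v (u' - μ • tmvec A (mvec A u')) =
      (l2norm h)⁻¹ * ((l2norm u)⁻¹ * dotp h (u - μ • tmvec A (mvec A u))) := by
    rw [hexp, hv, dotp_smul_left, dotp_smul_right]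
  rw [hval] at hle
  have := mul_le_mul_of_nonneg_left hle (by positivity : (0:ℝ) ≤ l2norm h * l2norm u)
  calc dotp h (u - μ • tmvec A (mvec A u))
      = (l2norm h * l2norm u) *
        ((l2norm h)⁻¹ * ((l2norm u)⁻¹ * dotp h (u - μ • tmvec A (mvec A u)))) := by
        field_simp
    _ ≤ (l2norm h * l2norm u) * rsRho A μ (sparseSet n a ∩ unitSphere n)
          (sparseSet n b ∩ unitSphere n) := this
    _ = _ := by ring

/-- The ξ-type bound. -/
lemma xi_bound (A : Fin m → Fin n → ℝ) (w : Fin m → ℝ) {a : ℕ} (hn : 0 < n)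
    (ha : 1 ≤ a) (h : Fin n → ℝ) (hh : l0 h ≤ a) :
    dotp h (tmvec A ((l2norm w)⁻¹ • w)) ≤
      rsXi A w (sparseSet n a ∩ unitSphere n) * l2norm h := by
  have hξ := xi_nonneg A w (a := a) hn ha
  rcases eq_or_ne h 0 with rfl | hh0
  · rw [dotp_zero_left]
    have : l2norm (0 : Fin n → ℝ) = 0 := by simp [l2norm]
    rw [this, mul_zero]
  have hhp := l2norm_pos hh0
  have hmem : dotp ((l2norm h)⁻¹ • h) (tmvec A ((l2norm w)⁻¹ • w)) ∈
      {t | ∃ v ∈ sparseSet n a ∩ unitSphere n, t = dotp v (tmvec A ((l2norm w)⁻¹ • w))} :=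
    ⟨_, normalize_mem hh0 hh, rfl⟩
  have hle := le_csSup (xi_bddAbove A w _ Set.inter_subset_right) hmem
  rw [dotp_smul_left] at hle
  have := mul_le_mul_of_nonneg_left hle hhp.le
  calc dotp h (tmvec A ((l2norm w)⁻¹ • w))
      = l2norm h * ((l2norm h)⁻¹ * dotp h (tmvec A ((l2norm w)⁻¹ • w))) := by
        field_simp
    _ ≤ l2norm h * rsXi A w (sparseSet n a ∩ unitSphere n) := this
    _ = _ := mul_comm _ _

lemma tmvec_w_eq (A : Fin m → Fin n → ℝ) (w : Fin m → ℝ) :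
    tmvec A w = l2norm w • tmvec A ((l2norm w)⁻¹ • w) := by
  rcases eq_or_ne (l2norm w) 0 with h | h
  · have hw0 : w = 0 := l2norm_eq_zero h
    subst hw0; simp [h]
  · rw [tmvec_smul, smul_smul, mul_inv_cancel₀ h, one_smul]

lemma l1_diff_le (xstar z : Fin n → ℝ) :
    l1norm xstar - l1norm z ≤ ∑ i ∈ suppF xstar, |z i - xstar i| := by
  have hsplit : ∀ f : Fin n → ℝ,
      ∑ i, f i = ∑ i ∈ suppF xstar, f i + ∑ i ∈ Finset.univ \ suppF xstar, f i := by
    intro f; rw [add_comm, Finset.sum_sdiff (Finset.subset_univ _)]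
  have heq : l1norm xstar - l1norm z = ∑ i, (|xstar i| - |z i|) := by
    unfold l1norm; rw [Finset.sum_sub_distrib]
  rw [heq, hsplit]
  have h1 : ∑ i ∈ suppF xstar, (|xstar i| - |z i|) ≤ ∑ i ∈ suppF xstar, |z i - xstar i| :=
    Finset.sum_le_sum fun i _ => by
      have h := abs_sub_abs_le_abs_sub (xstar i) (z i)
      rw [abs_sub_comm] at h
      linarith
  have h2 : ∑ i ∈ Finset.univ \ suppF xstar, (|xstar i| - |z i|) ≤ 0 := by
    apply Finset.sum_nonpos
    intro i hi
    have : xstar i = 0 := by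
      simp only [suppF, Finset.mem_sdiff, Finset.mem_filter, Finset.mem_univ, true_and,
        not_not] at hi
      simpa using hi
    rw [this, abs_zero]
    simp [abs_nonneg]
  linarith

lemma sum_abs_le_sqrt_card (S : Finset (Fin n)) (h : Fin n → ℝ) :
    ∑ i ∈ S, |h i| ≤ Real.sqrt S.card * l2norm h := by
  have cs : ∑ i ∈ S, 1 * |h i| ≤
      Real.sqrt (∑ _i ∈ S, (1:ℝ)^2) * Real.sqrt (∑ i ∈ S, |h i|^2) :=
    Real.sum_mul_le_sqrt_mul_sqrt S 1 (fun i => |h i|)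
  have e1 : ∑ _i ∈ S, (1:ℝ)^2 = S.card := by simp
  have e2 : ∑ i ∈ S, |h i|^2 ≤ ∑ i, h i ^ 2 := by
    calc ∑ i ∈ S, |h i|^2 = ∑ i ∈ S, h i ^ 2 := by simp [sq_abs]
      _ ≤ ∑ i, h i ^ 2 :=
          Finset.sum_le_sum_of_subset_of_nonneg (Finset.subset_univ S)
            (fun i _ _ => sq_nonneg _)
  calc ∑ i ∈ S, |h i| = ∑ i ∈ S, 1 * |h i| := by simp
    _ ≤ Real.sqrt (∑ _i ∈ S, (1:ℝ)^2) * Real.sqrt (∑ i ∈ S, |h i|^2) := cs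
    _ ≤ Real.sqrt S.card * l2norm h := by
        rw [e1]
        exact mul_le_mul_of_nonneg_left (Real.sqrt_le_sqrt e2) (Real.sqrt_nonneg _)

/-- First-order optimality of the proximal minimizer. -/
lemma key_opt (lm : ℝ) (hlm : 0 ≤ lm) (b xnext xstar : Fin n → ℝ)
    (hmin : ∀ z : Fin n → ℝ,
      lm * l1norm xnext + (1 / 2) * l2norm (xnext - b) ^ 2 ≤
      lm * l1norm z + (1 / 2) * l2norm (z - b) ^ 2) :
    dotp (xnext - xstar) (xnext - b) ≤ lm * (l1norm xstar - l1norm xnext) := by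
  set q : Fin n → ℝ := xstar - xnext with hq
  set C : ℝ := l2norm q ^ 2 with hC0
  set D : ℝ := dotp (xnext - b) q with hD0
  have hC : 0 ≤ C := sq_nonneg _
  have hexpand : ∀ t : ℝ, l2norm (xnext + t • q - b) ^ 2 =
      l2norm (xnext - b) ^ 2 + 2 * t * D + t ^ 2 * C := by
    intro t
    rw [hC0, hD0]
    simp only [l2norm_sq, dotp, Pi.add_apply, Pi.sub_apply, Pi.smul_apply, smul_eq_mul]
    rw [Finset.mul_sum, Finset.mul_sum, ← Finset.sum_add_distrib, ← Finset.sum_add_distrib]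
    exact Finset.sum_congr rfl fun i _ => by ring
  have main : ∀ t : ℝ, 0 < t → t ≤ 1 →
      -D - lm * (l1norm xstar - l1norm xnext) ≤ t / 2 * C := by
    intro t ht ht1
    have hz := hmin (xnext + t • q)
    have hl1 : l1norm (xnext + t • q) ≤ (1 - t) * l1norm xnext + t * l1norm xstar := by
      unfold l1norm
      rw [Finset.mul_sum, Finset.mul_sum, ← Finset.sum_add_distrib]
      apply Finset.sum_le_sum
      intro i _
      calc |(xnext + t • q) i| = |(1 - t) * xnext i + t * xstar i| := by
            simp only [Pi.add_apply, Pi.smul_apply, smul_eq_mul, hq, Pi.sub_apply]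
            ring_nf
        _ ≤ |(1 - t) * xnext i| + |t * xstar i| := abs_add_le _ _
        _ = (1 - t) * |xnext i| + t * |xstar i| := by
            rw [abs_mul, abs_mul, abs_of_nonneg (by linarith : (0:ℝ) ≤ 1 - t),
              abs_of_nonneg ht.le]
    rw [hexpand t] at hz
    have hz2 : lm * l1norm (xnext + t • q) ≤
        lm * ((1 - t) * l1norm xnext + t * l1norm xstar) :=
      mul_le_mul_of_nonneg_left hl1 hlm
    have h0 : 0 ≤ t * (lm * (l1norm xstar - l1norm xnext) + D + t / 2 * C) := by
      nlinarith
    have h1 : 0 ≤ lm * (l1norm xstar - l1norm xnext) + D + t / 2 * C :=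
      (mul_nonneg_iff_of_pos_left ht).mp h0
    linarith
  have hfin : -D - lm * (l1norm xstar - l1norm xnext) ≤ 0 := by
    apply le_of_forall_pos_le_add
    intro ε hε
    set t : ℝ := min 1 (ε / (C + 1)) with htdef
    have ht : 0 < t := lt_min one_pos (div_pos hε (by linarith))
    have ht1 : t ≤ 1 := min_le_left _ _
    have h3 : t ≤ ε / (C + 1) := min_le_right _ _
    have h5 : t / 2 * C ≤ ε := by
      have h4 : t * C ≤ (ε / (C + 1)) * C := mul_le_mul_of_nonneg_right h3 hC
      have h6 : (ε / (C + 1)) * C ≤ ε := by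
        rw [div_mul_eq_mul_div, div_le_iff₀ (by linarith : (0:ℝ) < C + 1)]
        nlinarith
      linarith
    linarith [main t ht ht1]
  have heqD : dotp (xnext - xstar) (xnext - b) = -D := by
    rw [hD0, hq, show xstar - xnext = -(xnext - xstar) from (neg_sub _ _).symm,
      dotp_neg_right, neg_neg, dotp_comm]
  linarith [heqD]

end Stmt2Aux
end Stmt2Aux

/-- One-step deterministic contraction, sparse case.
If both `x_t` and the proximal-gradient homotopy update `x_{t+1}` have fewer than `s` nonzero
entries outside `supp(x⋆)`, `‖x_t - x⋆‖₂ ≤ Δ_t`, and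
`λ_t = (ξ_s δ + ρ_{s,2s} Δ_t/μ)/√s`, then `‖x_{t+1} - x⋆‖₂ ≤ 2 ρ_{2s,2s} Δ_t + 2 ξ_{2s} μ δ`. -/
theorem stmt2 {m n : ℕ} (A : Fin m → Fin n → ℝ) (w : Fin m → ℝ) (δ : ℝ)
    (xstar : Fin n → ℝ) (s : ℕ) (μ Δt lamt : ℝ) (xt xnext : Fin n → ℝ)
    (y : Fin m → ℝ) (hy : y = mvec A xstar + w)
    (hxs : l0 xstar ≤ s) (hw : l2norm w ≤ δ) (hμ : 0 < μ)
    (hsuppt : (suppF xt \ suppF xstar).card < s)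
    (hsuppt1 : (suppF xnext \ suppF xstar).card < s)
    (hΔ : l2norm (xt - xstar) ≤ Δt)
    (hlam : lamt = (rsXi A w (sparseSet n s ∩ unitSphere n) * δ +
        rsRho A μ (sparseSet n s ∩ unitSphere n) (sparseSet n (2 * s) ∩ unitSphere n) * Δt / μ)
        / Real.sqrt s)
    (hmin : ∀ z : Fin n → ℝ,
        lamt * μ * l1norm xnext + (1 / 2) * l2norm (xnext - (xt - μ • tmvec A (mvec A xt - y))) ^ 2 ≤
        lamt * μ * l1norm z + (1 / 2) * l2norm (z - (xt - μ • tmvec A (mvec A xt - y))) ^ 2) :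
    l2norm (xnext - xstar) ≤
      2 * rsRho A μ (sparseSet n (2 * s) ∩ unitSphere n) (sparseSet n (2 * s) ∩ unitSphere n) * Δt +
      2 * rsXi A w (sparseSet n (2 * s) ∩ unitSphere n) * μ * δ := by
  classical
  open Stmt2Aux in
  rcases Nat.eq_zero_or_pos n with hn0 | hn
  · subst hn0
    have hsph : unitSphere 0 = (∅ : Set (Fin 0 → ℝ)) := by
      ext x
      simp [unitSphere, l2norm]
    have hLHS : l2norm (xnext - xstar) = 0 := by simp [l2norm]
    have h1 : rsRho A μ (sparseSet 0 (2 * s) ∩ unitSphere 0)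
        (sparseSet 0 (2 * s) ∩ unitSphere 0) = 0 := by
      unfold rsRho
      rw [show {t | ∃ v ∈ sparseSet 0 (2 * s) ∩ unitSphere 0,
          ∃ u ∈ sparseSet 0 (2 * s) ∩ unitSphere 0,
          t = dotp v (u - μ • tmvec A (mvec A u))} = (∅ : Set ℝ) by
        ext t; simp [hsph]]
      exact Real.sSup_empty
    have h2 : rsXi A w (sparseSet 0 (2 * s) ∩ unitSphere 0) = 0 := by
      unfold rsXi
      rw [show {t | ∃ v ∈ sparseSet 0 (2 * s) ∩ unitSphere 0,
          t = dotp v (tmvec A ((l2norm w)⁻¹ • w))} = (∅ : Set ℝ) by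
        ext t; simp [hsph]]
      exact Real.sSup_empty
    rw [hLHS, h1, h2]
    norm_num
  -- main case
  have hs : 0 < s := by omega
  have hs1 : 1 ≤ s := hs
  have hs2 : 1 ≤ 2 * s := by omega
  set ρ22 := rsRho A μ (sparseSet n (2 * s) ∩ unitSphere n)
    (sparseSet n (2 * s) ∩ unitSphere n) with hρ22def
  set ξ22 := rsXi A w (sparseSet n (2 * s) ∩ unitSphere n) with hξ22def
  set ρs2s := rsRho A μ (sparseSet n s ∩ unitSphere n)
    (sparseSet n (2 * s) ∩ unitSphere n) with hρs2sdef
  set ξs := rsXi A w (sparseSet n s ∩ unitSphere n) with hξsdef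
  set h := xnext - xstar with hh
  set u := xt - xstar with hu
  set b := xt - μ • tmvec A (mvec A xt - y) with hb
  have hδ : 0 ≤ δ := le_trans (l2norm_nonneg w) hw
  have hΔ0 : 0 ≤ Δt := le_trans (l2norm_nonneg _) hΔ
  have hls : l0 h ≤ 2 * s := by
    rw [hh]
    calc l0 (xnext - xstar) ≤ (suppF xnext \ suppF xstar).card + (suppF xstar).card :=
          l0_sub_le _ _
      _ ≤ s + s := add_le_add (le_of_lt hsuppt1) hxs
      _ = 2 * s := (two_mul s).symm
  have hlu : l0 u ≤ 2 * s := by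
    rw [hu]
    calc l0 (xt - xstar) ≤ (suppF xt \ suppF xstar).card + (suppF xstar).card :=
          l0_sub_le _ _
      _ ≤ s + s := add_le_add (le_of_lt hsuppt) hxs
      _ = 2 * s := (two_mul s).symm
  have hρ22 : 0 ≤ ρ22 := rho_nonneg A μ hn hs2 hs2
  have hξ22 : 0 ≤ ξ22 := xi_nonneg A w hn hs2
  have hρs2s : 0 ≤ ρs2s := rho_nonneg A μ hn hs1 hs2
  have hξs : 0 ≤ ξs := xi_nonneg A w hn hs1
  have hsqrts : 0 < Real.sqrt s := Real.sqrt_pos.mpr (by exact_mod_cast hs)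
  have hlam0 : 0 ≤ lamt := by
    rw [hlam]
    apply div_nonneg _ hsqrts.le
    exact add_nonneg (mul_nonneg hξs hδ)
      (div_nonneg (mul_nonneg hρs2s hΔ0) hμ.le)
  -- optimality
  have hopt := key_opt (lamt * μ) (mul_nonneg hlam0 hμ.le) b xnext xstar hmin
  have hsum : (xnext - b) + (b - xstar) = h := by rw [hh]; abel
  have hdecomp : dotp h h = dotp h (xnext - b) + dotp h (b - xstar) := by
    rw [← dotp_add_right, hsum]
  have hbx : b - xstar = (u - μ • tmvec A (mvec A u)) + μ • tmvec A w := by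
    rw [hb, hu, hy]
    funext j
    simp only [Pi.add_apply, Pi.sub_apply, Pi.smul_apply, smul_eq_mul, tmvec, mvec, dotp,
      mul_sub, mul_add, Finset.sum_sub_distrib, Finset.sum_add_distrib]
    ring
  -- ρ term
  have hT1 : dotp h (u - μ • tmvec A (mvec A u)) ≤ ρ22 * (l2norm h * l2norm u) :=
    rho_bound A μ hn hs2 hs2 h u hls hlu
  -- ξ term
  have hT2 : dotp h (μ • tmvec A w) =
      μ * (l2norm w * dotp h (tmvec A ((l2norm w)⁻¹ • w))) := by
    rw [dotp_smul_right, tmvec_w_eq A w, dotp_smul_right]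
  have hT2b : dotp h (tmvec A ((l2norm w)⁻¹ • w)) ≤ ξ22 * l2norm h :=
    xi_bound A w hn hs2 h hls
  -- ℓ¹ bound
  have hl1 : l1norm xstar - l1norm xnext ≤ Real.sqrt s * l2norm h := by
    calc l1norm xstar - l1norm xnext ≤ ∑ i ∈ suppF xstar, |xnext i - xstar i| :=
          l1_diff_le _ _
      _ = ∑ i ∈ suppF xstar, |h i| := by
          apply Finset.sum_congr rfl
          intro i _
          rw [hh]
          simp
      _ ≤ Real.sqrt (suppF xstar).card * l2norm h := sum_abs_le_sqrt_card _ _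
      _ ≤ Real.sqrt s * l2norm h := by
          apply mul_le_mul_of_nonneg_right _ (l2norm_nonneg _)
          exact Real.sqrt_le_sqrt (by exact_mod_cast hxs)
  have hlam2 : lamt * μ * Real.sqrt s = ξs * μ * δ + ρs2s * Δt := by
    rw [hlam]
    field_simp
  have hNH : 0 ≤ l2norm h := l2norm_nonneg h
  have step1 : dotp h (xnext - b) ≤ (ξs * μ * δ + ρs2s * Δt) * l2norm h := by
    have e2 : lamt * μ * (Real.sqrt s * l2norm h) = (ξs * μ * δ + ρs2s * Δt) * l2norm h := by
      rw [← hlam2]; ring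
    calc dotp h (xnext - b) ≤ lamt * μ * (l1norm xstar - l1norm xnext) := by
          rw [hh]; exact hopt
      _ ≤ lamt * μ * (Real.sqrt s * l2norm h) :=
          mul_le_mul_of_nonneg_left hl1 (mul_nonneg hlam0 hμ.le)
      _ = (ξs * μ * δ + ρs2s * Δt) * l2norm h := e2
  have step2 : dotp h (b - xstar) ≤ ρ22 * l2norm h * Δt + ξ22 * l2norm h * μ * δ := by
    rw [hbx, dotp_add_right]
    have s2a : dotp h (u - μ • tmvec A (mvec A u)) ≤ ρ22 * l2norm h * Δt := by
      calc dotp h (u - μ • tmvec A (mvec A u)) ≤ ρ22 * (l2norm h * l2norm u) := hT1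
        _ ≤ ρ22 * (l2norm h * Δt) :=
            mul_le_mul_of_nonneg_left (mul_le_mul_of_nonneg_left hΔ hNH) hρ22
        _ = ρ22 * l2norm h * Δt := by ring
    have s2b : dotp h (μ • tmvec A w) ≤ ξ22 * l2norm h * μ * δ := by
      rw [hT2]
      have c1 : l2norm w * dotp h (tmvec A ((l2norm w)⁻¹ • w)) ≤ δ * (ξ22 * l2norm h) := by
        calc l2norm w * dotp h (tmvec A ((l2norm w)⁻¹ • w))
            ≤ l2norm w * (ξ22 * l2norm h) :=
              mul_le_mul_of_nonneg_left hT2b (l2norm_nonneg w)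
          _ ≤ δ * (ξ22 * l2norm h) :=
              mul_le_mul_of_nonneg_right hw (mul_nonneg hξ22 hNH)
      calc μ * (l2norm w * dotp h (tmvec A ((l2norm w)⁻¹ • w)))
          ≤ μ * (δ * (ξ22 * l2norm h)) := mul_le_mul_of_nonneg_left c1 hμ.le
        _ = ξ22 * l2norm h * μ * δ := by ring
    linarith
  have hmono1 : ρs2s ≤ ρ22 := rho_mono A μ hn hs1 hs2 (by omega)
  have hmono2 : ξs ≤ ξ22 := xi_mono A w hn hs1 (by omega)
  have e1 : dotp h h = l2norm h ^ 2 := dotp_self h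
  have h9 : l2norm h ^ 2 ≤
      (ξs * μ * δ + ρs2s * Δt) * l2norm h + (ρ22 * l2norm h * Δt + ξ22 * l2norm h * μ * δ) := by
    rw [← e1, hdecomp]; linarith
  set NH := l2norm h with hNHdef
  clear_value ρ22 ξ22 ρs2s ξs NH
  clear hlam hmin hdecomp hsum hopt hbx hT1 hT2 hT2b hl1 hlam2 step1 step2 e1 hls hlu
  have hmain : NH ^ 2 ≤ NH * (2 * ρ22 * Δt + 2 * ξ22 * μ * δ) := by
    have f1 : 0 ≤ (ξ22 - ξs) * (μ * δ) :=
      mul_nonneg (sub_nonneg.mpr hmono2) (mul_nonneg hμ.le hδ)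
    have f2 : 0 ≤ (ρ22 - ρs2s) * Δt := mul_nonneg (sub_nonneg.mpr hmono1) hΔ0
    have f3 : 0 ≤ ((ξ22 - ξs) * (μ * δ)) * NH := mul_nonneg f1 hNH
    have f4 : 0 ≤ ((ρ22 - ρs2s) * Δt) * NH := mul_nonneg f2 hNH
    nlinarith [h9, f3, f4]
  have a1 : 0 ≤ 2 * ρ22 * Δt :=
    mul_nonneg (mul_nonneg (by norm_num : (0:ℝ) ≤ 2) hρ22) hΔ0
  have a2 : 0 ≤ 2 * ξ22 * μ * δ :=
    mul_nonneg (mul_nonneg (mul_nonneg (by norm_num : (0:ℝ) ≤ 2) hξ22) hμ.le) hδ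
  nlinarith [hmain, hNH, a1, a2]
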